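/- Fix n ≥ 3 and finite local dimensions for n parties. For each pair 1 ≤ i < j ≤ n, let Λ_{ij} be a linear map sending n-partite density matrices to two-qubit density matrices (interpreted as shared by parties i and j) such that, whenever the input state is separable across a bipartition M|M̄ of the n parties with i ∈ M and j ∈ M̄, the output Λ_{ij}(·) is a separable two-qubit state. (Every LOCC protocol mapping the n parties to a bipartite state of i and j has these properties.) Then for every n-partite biseparable density matrix χ: (2/(n(n−1))) · ∑_{i<j} tr(Λ_{ij}(χ) · φ⁺₂) ≤ 1 − 1/n, where φ⁺₂ is the projector onto the two-qubit maximally entangled state (|00⟩+|11⟩)/√2. -/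

import Mathlib

open scoped BigOperators ComplexOrder

noncomputable section

/-- Projector onto the `d`-dimensional maximally entangled state
`|φ⁺_d⟩ = (1/√d) ∑ᵢ |ii⟩`, as a matrix on `ℂ^d ⊗ ℂ^d`. -/
def phiPlus (d : ℕ) : Matrix (Fin d × Fin d) (Fin d × Fin d) ℂ :=
  fun x y => if x.1 = x.2 ∧ y.1 = y.2 then (1 / (d : ℂ)) else 0

/-- The `d`-dimensional isotropic state with visibility `p`:
`ρ(p) = p φ⁺_d + (1-p) 𝟙/d²`. -/
def iso (d : ℕ) (p : ℝ) : Matrix (Fin d × Fin d) (Fin d × Fin d) ℂ :=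
  (p : ℂ) • phiPlus d +
    (((1 - p) / (d : ℝ) ^ 2 : ℝ) : ℂ) • (1 : Matrix (Fin d × Fin d) (Fin d × Fin d) ℂ)

/-- The (possibly unnormalized) projector `|ψ⟩⟨ψ|` onto a vector `ψ`. -/
def vecProj {ι : Type} (ψ : ι → ℂ) : Matrix ι ι ℂ :=
  fun i j => ψ i * (starRingEnd ℂ) (ψ j)

/-- A multipartite pure-state vector (parties indexed by `ι`, party `i` holding the
finite-dimensional space with basis `H i`) factors as a tensor product across the
bipartition `M | Mᶜ`: `ψ = f ⊗ g` where `f` depends only on the coordinates of the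
parties in `M` and `g` only on those of the parties outside `M`. -/
def FactorsAcross {ι : Type} {H : ι → Type} (M : Finset ι)
    (ψ : ((i : ι) → H i) → ℂ) : Prop :=
  ∃ f g : ((i : ι) → H i) → ℂ,
    (∀ x, ψ x = f x * g x) ∧
    (∀ x y, (∀ i ∈ M, x i = y i) → f x = f y) ∧
    (∀ x y, (∀ i, i ∉ M → x i = y i) → g x = g y)

/-- A multipartite pure-state vector is biseparable: it factors across some nonempty
proper bipartition of the parties. -/
def PureBiseparable {ι : Type} [Fintype ι] {H : ι → Type}
    (ψ : ((i : ι) → H i) → ℂ) : Prop :=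
  ∃ M : Finset ι, M.Nonempty ∧ M ≠ Finset.univ ∧ FactorsAcross M ψ

/-- A multipartite density matrix is biseparable if it is a finite convex combination
of projectors onto normalized biseparable pure states.  A state which is not
biseparable is genuinely multipartite entangled (GME). -/
def Biseparable {ι : Type} [Fintype ι] [DecidableEq ι] {H : ι → Type}
    [∀ i, Fintype (H i)]
    (ρ : Matrix ((i : ι) → H i) ((i : ι) → H i) ℂ) : Prop :=
  ∃ (k : ℕ) (w : Fin k → ℝ) (ψ : Fin k → ((i : ι) → H i) → ℂ),
    (∀ t, 0 ≤ w t) ∧ (∑ t, w t = 1) ∧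
    (∀ t, PureBiseparable (ψ t)) ∧
    (∀ t, ∑ x, Complex.normSq (ψ t x) = 1) ∧
    ρ = ∑ t, (w t : ℂ) • vecProj (ψ t)

/-- A density matrix: positive semidefinite with unit trace. -/
def IsState {ι : Type} [Fintype ι] (ρ : Matrix ι ι ℂ) : Prop :=
  ρ.PosSemidef ∧ ρ.trace = 1

/-- An `n`-partite density matrix is separable across the bipartition `M | Mᶜ` if it is
a finite convex combination of projectors onto normalized pure product vectors across
that bipartition. -/
def SeparableAcross {ι : Type} [Fintype ι] [DecidableEq ι] {H : ι → Type}
    [∀ i, Fintype (H i)] (M : Finset ι)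
    (ρ : Matrix ((i : ι) → H i) ((i : ι) → H i) ℂ) : Prop :=
  ∃ (k : ℕ) (w : Fin k → ℝ) (ψ : Fin k → ((i : ι) → H i) → ℂ),
    (∀ t, 0 ≤ w t) ∧ (∑ t, w t = 1) ∧
    (∀ t, FactorsAcross M (ψ t)) ∧
    (∀ t, ∑ x, Complex.normSq (ψ t x) = 1) ∧
    ρ = ∑ t, (w t : ℂ) • vecProj (ψ t)

/-- A separable two-qubit density matrix: a finite convex combination of projectors
onto normalized product vectors. -/
def Sep2 (ρ : Matrix (Fin 2 × Fin 2) (Fin 2 × Fin 2) ℂ) : Prop :=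
  ∃ (k : ℕ) (w : Fin k → ℝ) (f g : Fin k → Fin 2 → ℂ),
    (∀ t, 0 ≤ w t) ∧ (∑ t, w t = 1) ∧
    (∀ t, ∑ a, Complex.normSq (f t a) = 1) ∧
    (∀ t, ∑ a, Complex.normSq (g t a) = 1) ∧
    ρ = ∑ t, (w t : ℂ) • vecProj (fun x => f t x.1 * g t x.2)

-- AUX MARKER START
section Aux

lemma vecProj_posSemidef {ι : Type} [Fintype ι] (ψ : ι → ℂ) : (vecProj ψ).PosSemidef := by
  rw [Matrix.posSemidef_iff_dotProduct_mulVec]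
  constructor
  · ext i j
    simp [vecProj, Matrix.conjTranspose_apply, mul_comm]
  · intro x
    set c := ∑ j, (starRingEnd ℂ) (ψ j) * x j with hc
    have h1 : dotProduct (star x) (Matrix.mulVec (vecProj ψ) x)
        = (∑ i, (starRingEnd ℂ) (x i) * ψ i) * c := by
      rw [hc, Finset.sum_mul_sum]
      simp only [dotProduct, Matrix.mulVec, vecProj, Pi.star_apply, Finset.mul_sum]
      exact Finset.sum_congr rfl fun i _ => Finset.sum_congr rfl fun j _ => by
        simp only [Complex.star_def]; ring
    have h2 : (∑ i, (starRingEnd ℂ) (x i) * ψ i) = (starRingEnd ℂ) c := by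
      rw [hc, map_sum]
      exact Finset.sum_congr rfl fun j _ => by rw [map_mul, Complex.conj_conj]; ring
    rw [h1, h2, mul_comm, Complex.mul_conj]
    exact Complex.zero_le_real.mpr (Complex.normSq_nonneg c)

lemma trace_vecProj {ι : Type} [Fintype ι] (ψ : ι → ℂ) :
    (vecProj ψ).trace = ((∑ x, Complex.normSq (ψ x) : ℝ) : ℂ) := by
  simp [Matrix.trace, Matrix.diag, vecProj, Complex.mul_conj]

lemma isState_vecProj {ι : Type} [Fintype ι] (ψ : ι → ℂ)
    (h : ∑ x, Complex.normSq (ψ x) = 1) : IsState (vecProj ψ) := by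
  refine ⟨vecProj_posSemidef ψ, ?_⟩
  rw [trace_vecProj, h]; norm_num

lemma trace_mul_phiPlus (ρ : Matrix (Fin 2 × Fin 2) (Fin 2 × Fin 2) ℂ) :
    Matrix.trace (ρ * phiPlus 2) =
      (1/2) * (ρ (0,0) (0,0) + ρ (0,0) (1,1) + ρ (1,1) (0,0) + ρ (1,1) (1,1)) := by
  simp [Matrix.trace, Matrix.diag, Matrix.mul_apply, phiPlus,
    Fintype.sum_prod_type, Fin.sum_univ_two]
  ring

lemma trace_vecProj_mul_phiPlus (ψ : Fin 2 × Fin 2 → ℂ) :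
    Matrix.trace (vecProj ψ * phiPlus 2) =
      ((Complex.normSq (ψ (0,0) + ψ (1,1)) / 2 : ℝ) : ℂ) := by
  rw [trace_mul_phiPlus]
  have hns : ((Complex.normSq (ψ (0,0) + ψ (1,1)) : ℝ) : ℂ)
      = (ψ (0,0) + ψ (1,1)) * (starRingEnd ℂ) (ψ (0,0) + ψ (1,1)) := (Complex.mul_conj _).symm
  push_cast
  rw [hns]
  simp only [vecProj, map_add]
  ring

lemma psd_re_apply_nonneg {ι : Type} [Fintype ι] [DecidableEq ι]
    {ρ : Matrix ι ι ℂ} (h : ρ.PosSemidef) (x : ι → ℂ) :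
    0 ≤ (dotProduct (star x) (Matrix.mulVec ρ x)).re :=
  (Complex.le_def.mp (h.dotProduct_mulVec_nonneg x)).1

lemma diag_re_nonneg {ι : Type} [Fintype ι] [DecidableEq ι]
    {ρ : Matrix ι ι ℂ} (h : ρ.PosSemidef) (z : ι) : 0 ≤ (ρ z z).re := by
  have := psd_re_apply_nonneg h (Pi.single z 1)
  simpa [dotProduct, Matrix.mulVec, Pi.single_apply] using this

lemma state_fid (ρ : Matrix (Fin 2 × Fin 2) (Fin 2 × Fin 2) ℂ) (h : IsState ρ) :
    (Matrix.trace (ρ * phiPlus 2)).re ≤ 1 := by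
  have hx := psd_re_apply_nonneg h.1
    (Pi.single ((0 : Fin 2), (0 : Fin 2)) 1 - Pi.single ((1 : Fin 2), (1 : Fin 2)) 1)
  have hd : ∀ z, 0 ≤ (ρ z z).re := diag_re_nonneg h.1
  have htr : (Matrix.trace ρ).re = 1 := by rw [h.2]; simp
  rw [Matrix.trace] at htr
  simp only [Complex.re_sum, Matrix.diag, Fintype.sum_prod_type, Fin.sum_univ_two] at htr
  simp only [dotProduct, Matrix.mulVec, Pi.sub_apply, Pi.single_apply,
    Fintype.sum_prod_type, Fin.sum_univ_two, star_sub, Pi.star_apply] at hx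
  rw [trace_mul_phiPlus]
  norm_num at hx ⊢
  simp only [Complex.add_re, Prod.mk_zero_zero, Prod.mk_one_one] at htr
  have h00 := hd 0; have h11 := hd 1
  have h01 := hd (0,1); have h10 := hd (1,0)
  have e00 : (ρ 0 0).re = (ρ (0,0) (0,0)).re := rfl; have e11 : (ρ 1 1).re = (ρ (1,1) (1,1)).re := rfl
  linarith

lemma normSq_prod_sum_le (a b c d : ℂ)
    (h1 : Complex.normSq a + Complex.normSq b = 1)
    (h2 : Complex.normSq c + Complex.normSq d = 1) :
    Complex.normSq (a * c + b * d) ≤ 1 := by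
  have habs : ‖a * c + b * d‖
      ≤ ‖a‖ * ‖c‖ + ‖b‖ * ‖d‖ := by
    calc ‖a * c + b * d‖ ≤ ‖a*c‖ + ‖b*d‖ :=
          norm_add_le _ _
      _ = _ := by rw [norm_mul, norm_mul]
  have h0 : (0:ℝ) ≤ ‖a * c + b * d‖ := norm_nonneg _
  have e0 : Complex.normSq (a*c+b*d) = (‖a*c+b*d‖)^2 := (Complex.sq_norm _).symm
  have e1 : (‖a‖)^2 = Complex.normSq a := Complex.sq_norm a
  have e2 : (‖b‖)^2 = Complex.normSq b := Complex.sq_norm b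
  have e3 : (‖c‖)^2 = Complex.normSq c := Complex.sq_norm c
  have e4 : (‖d‖)^2 = Complex.normSq d := Complex.sq_norm d
  nlinarith [sq_nonneg (‖a‖ * ‖d‖ - ‖b‖ * ‖c‖),
    norm_nonneg a, norm_nonneg b, norm_nonneg c, norm_nonneg d]

lemma sep2_fid (ρ : Matrix (Fin 2 × Fin 2) (Fin 2 × Fin 2) ℂ) (h : Sep2 ρ) :
    (Matrix.trace (ρ * phiPlus 2)).re ≤ 1/2 := by
  obtain ⟨k, w, f, g, hw0, hw1, hf, hg, rfl⟩ := h
  rw [Matrix.sum_mul, Matrix.trace_sum]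
  simp only [Matrix.smul_mul, Matrix.trace_smul, smul_eq_mul, Complex.re_sum]
  have hb : ∀ t, ((w t : ℂ) * Matrix.trace (vecProj (fun x : Fin 2 × Fin 2 => f t x.1 * g t x.2) * phiPlus 2)).re
      ≤ w t * (1/2) := by
    intro t
    rw [trace_vecProj_mul_phiPlus, Complex.re_ofReal_mul]
    have hns : Complex.normSq (f t 0 * g t 0 + f t 1 * g t 1) ≤ 1 := by
      apply normSq_prod_sum_le
      · simpa [Fin.sum_univ_two] using hf t
      · simpa [Fin.sum_univ_two] using hg t
    have : Complex.normSq ((fun x : Fin 2 × Fin 2 => f t x.1 * g t x.2) (0,0)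
        + (fun x : Fin 2 × Fin 2 => f t x.1 * g t x.2) (1,1)) / 2 ≤ 1/2 := by
      simpa using by linarith [hns]
    exact mul_le_mul_of_nonneg_left this (hw0 t)
  refine le_trans (Finset.sum_le_sum fun t _ => hb t) ?_
  rw [← Finset.sum_mul, hw1, one_mul]

section comb
variable {α : Type*} [LinearOrder α]

def sortPair (a b : α) : α × α := if a < b then (a, b) else (b, a)

lemma sortPair_lt {a b : α} (hab : a ≠ b) : (sortPair a b).1 < (sortPair a b).2 := by
  unfold sortPair; split
  · simpa using ‹a < b›
  · simpa using lt_of_le_of_ne (not_lt.mp ‹¬ a < b›) hab.symm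

lemma sortPair_cases (a b : α) : sortPair a b = (a, b) ∨ sortPair a b = (b, a) := by
  unfold sortPair; split <;> simp

lemma sortPair_eq {a b c d : α} (h : sortPair a b = sortPair c d) :
    (a = c ∧ b = d) ∨ (a = d ∧ b = c) := by
  unfold sortPair at h
  split at h <;> split at h <;> simp only [Prod.ext_iff] at h <;> tauto

end comb

lemma card_lt_pairs (n : ℕ) :
    2 * (Finset.univ.filter (fun e : Fin n × Fin n => e.1 < e.2)).card + n = n * n := by
  classical
  set A := Finset.univ.filter (fun e : Fin n × Fin n => e.1 < e.2) with hA
  set B := Finset.univ.filter (fun e : Fin n × Fin n => e.2 < e.1) with hB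
  have hgt : B = A.image Prod.swap := by
    ext e
    simp only [hA, hB, Finset.mem_image, Finset.mem_filter, Finset.mem_univ, true_and]
    constructor
    · intro h; exact ⟨e.swap, h, Prod.swap_swap e⟩
    · rintro ⟨a, ha, rfl⟩; exact ha
  have hcards : B.card = A.card := by
    rw [hgt, Finset.card_image_of_injective _ Prod.swap_injective]
  have hunion : A ∪ B = (Finset.univ : Finset (Fin n)).offDiag := by
    ext e
    simp only [hA, hB, Finset.mem_union, Finset.mem_filter, Finset.mem_univ, true_and,
      Finset.mem_offDiag]
    exact lt_or_lt_iff_ne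
  have hdisj : Disjoint A B := by
    rw [Finset.disjoint_left]
    intro e he he'
    rw [hA, Finset.mem_filter] at he
    rw [hB, Finset.mem_filter] at he'
    exact absurd he'.2 (not_lt.mpr (le_of_lt he.2))
  have hcard : A.card + B.card = n * n - n := by
    rw [← Finset.card_union_of_disjoint hdisj, hunion, Finset.offDiag_card,
      Finset.card_univ, Fintype.card_fin]
  have hle : n ≤ n * n := by
    rcases Nat.eq_zero_or_pos n with h | h
    · simp [h]
    · exact Nat.le_mul_of_pos_left n h
  omega

lemma crossing_card_ge (n : ℕ) (M : Finset (Fin n)) (i0 : Fin n) (hi0 : i0 ∈ M)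
    (j0 : Fin n) (hj0 : j0 ∉ M) :
    n - 1 ≤ (((Finset.univ.filter (fun e : Fin n × Fin n => e.1 < e.2)).filter
      (fun e => (e.1 ∈ M ∧ e.2 ∉ M) ∨ (e.2 ∈ M ∧ e.1 ∉ M))).card) := by
  classical
  have hij : i0 ≠ j0 := fun h => hj0 (h ▸ hi0)
  have hcard : (Finset.univ.erase i0).card = n - 1 := by
    rw [Finset.card_erase_of_mem (Finset.mem_univ i0), Finset.card_univ, Fintype.card_fin]
  rw [← hcard]
  apply Finset.card_le_card_of_injOn
    (fun k => if k ∈ M then sortPair k j0 else sortPair i0 k)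
  · intro k hk
    have hki0 : k ≠ i0 := Finset.ne_of_mem_erase hk
    by_cases hkM : k ∈ M
    · have hkj : k ≠ j0 := fun h => hj0 (h ▸ hkM)
      simp only [hkM, if_true, Finset.mem_coe, Finset.mem_filter, Finset.mem_univ, true_and]
      refine ⟨sortPair_lt hkj, ?_⟩
      rcases sortPair_cases k j0 with h | h <;> rw [h] <;> simp [hkM, hj0]
    · simp only [hkM, if_false, Finset.mem_coe, Finset.mem_filter, Finset.mem_univ, true_and]
      have : i0 ≠ k := fun h => hkM (h ▸ hi0)
      refine ⟨sortPair_lt this, ?_⟩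
      rcases sortPair_cases i0 k with h | h <;> rw [h] <;> simp [hi0, hkM]
  · intro k hk k' hk' heq
    simp only [Finset.coe_erase, Set.mem_diff, Set.mem_singleton_iff] at hk hk'
    have hki0 : k ≠ i0 := hk.2
    have hk'i0 : k' ≠ i0 := hk'.2
    by_cases hkM : k ∈ M <;> by_cases hk'M : k' ∈ M <;>
      simp only [hkM, hk'M, if_true, if_false] at heq
    · rcases sortPair_eq heq with ⟨h1, _⟩ | ⟨h1, h2⟩
      · exact h1
      · exact absurd (h1 ▸ hkM) hj0
    · rcases sortPair_eq heq with ⟨h1, h2⟩ | ⟨h1, h2⟩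
      · exact absurd h1 hki0
      · exact absurd (h2.symm ▸ hi0) hj0
    · rcases sortPair_eq heq with ⟨h1, h2⟩ | ⟨h1, h2⟩
      · exact absurd h1.symm hk'i0
      · exact absurd (h1 ▸ hi0) hj0
    · rcases sortPair_eq heq with ⟨h1, h2⟩ | ⟨h1, h2⟩
      · exact h2
      · exact absurd h2 hki0

lemma factorsAcross_compl {ι : Type} [Fintype ι] [DecidableEq ι] {H : ι → Type}
    (M : Finset ι) (ψ : ((i : ι) → H i) → ℂ) (h : FactorsAcross M ψ) :
    FactorsAcross Mᶜ ψ := by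
  obtain ⟨f, g, hfg, hf, hg⟩ := h
  refine ⟨g, f, fun x => by rw [hfg, mul_comm], ?_, ?_⟩
  · intro x y hxy
    exact hg x y fun i hi => hxy i (Finset.mem_compl.mpr hi)
  · intro x y hxy
    exact hf x y fun i hi => hxy i (fun hc => (Finset.mem_compl.mp hc) hi)

lemma separableAcross_vecProj {ι : Type} [Fintype ι] [DecidableEq ι] {H : ι → Type}
    [∀ i, Fintype (H i)] (M : Finset ι) (ψ : ((i : ι) → H i) → ℂ)
    (hfac : FactorsAcross M ψ) (hnorm : ∑ x, Complex.normSq (ψ x) = 1) :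
    SeparableAcross M (vecProj ψ) :=
  ⟨1, fun _ => 1, fun _ => ψ, fun _ => zero_le_one, by simp, fun _ => hfac,
    fun _ => hnorm, by simp⟩

end Aux
-- AUX MARKER END

/-- **Lemma 5 (fidelity bound for biseparable states).**
Fix `n ≥ 3` parties with local dimensions `D i`.  For each pair `i < j`, let `Λ i j` be
a linear map taking `n`-partite density matrices to two-qubit density matrices (shared
by `i` and `j`), which moreover sends every state that is separable across a bipartition
`M|M̄` with `i ∈ M`, `j ∉ M` to a separable two-qubit state (every LOCC protocol from
the `n` parties to parties `i, j` has these properties).  Then for every biseparable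
density matrix `χ`,
`(2/(n(n-1))) ∑_{i<j} F(Λ_{ij}(χ), φ⁺₂) ≤ 1 − 1/n`. -/
theorem biseparable_fidelity_bound (n : ℕ) (hn : 3 ≤ n) (D : Fin n → ℕ)
    (Λ : Fin n → Fin n →
      (Matrix ((i : Fin n) → Fin (D i)) ((i : Fin n) → Fin (D i)) ℂ →ₗ[ℂ]
        Matrix (Fin 2 × Fin 2) (Fin 2 × Fin 2) ℂ))
    (hΛstate : ∀ i j, i < j → ∀ ρ, IsState ρ → IsState (Λ i j ρ))
    (hΛsep : ∀ i j, i < j → ∀ M : Finset (Fin n), i ∈ M → j ∉ M →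
      ∀ ρ, IsState ρ → SeparableAcross M ρ → Sep2 (Λ i j ρ))
    (χ : Matrix ((i : Fin n) → Fin (D i)) ((i : Fin n) → Fin (D i)) ℂ)
    (hχ : IsState χ) (hbs : Biseparable χ) :
    (2 / ((n : ℝ) * ((n : ℝ) - 1))) *
        ∑ e ∈ Finset.univ.filter (fun e : Fin n × Fin n => e.1 < e.2),
          (Matrix.trace (Λ e.1 e.2 χ * phiPlus 2)).re
      ≤ 1 - 1 / (n : ℝ) := by
  classical
  obtain ⟨k, w, ψ, hw0, hw1, hbisep, hnorm, hχeq⟩ := hbs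
  set E := Finset.univ.filter (fun e : Fin n × Fin n => e.1 < e.2) with hE
  have hstate : ∀ t, IsState (vecProj (ψ t)) := fun t => isState_vecProj _ (hnorm t)
  -- key per-component bound
  have key : ∀ t, ∑ e ∈ E, (Matrix.trace (Λ e.1 e.2 (vecProj (ψ t)) * phiPlus 2)).re
      ≤ (E.card : ℝ) - ((n : ℝ) - 1) / 2 := by
    intro t
    obtain ⟨M, hMne, hMuniv, hfac⟩ := hbisep t
    obtain ⟨i0, hi0⟩ := hMne
    obtain ⟨j0, hj0⟩ : ∃ j0, j0 ∉ M := by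
      by_contra hcon
      push_neg at hcon
      exact hMuniv (Finset.eq_univ_iff_forall.mpr hcon)
    set X := E.filter (fun e => (e.1 ∈ M ∧ e.2 ∉ M) ∨ (e.2 ∈ M ∧ e.1 ∉ M)) with hX
    have hXsub : X ⊆ E := Finset.filter_subset _ _
    have hXcard : ((n : ℝ) - 1) ≤ (X.card : ℝ) := by
      have h1 : n - 1 ≤ X.card := crossing_card_ge n M i0 hi0 j0 hj0
      have h2 : ((n - 1 : ℕ) : ℝ) = (n : ℝ) - 1 := by
        rw [Nat.cast_sub (by omega)]; norm_num
      calc ((n : ℝ) - 1) = ((n - 1 : ℕ) : ℝ) := h2.symm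
        _ ≤ (X.card : ℝ) := by exact_mod_cast h1
    -- bound on crossing edges
    have hcross : ∀ e ∈ X, (Matrix.trace (Λ e.1 e.2 (vecProj (ψ t)) * phiPlus 2)).re ≤ 1/2 := by
      intro e he
      rw [hX, Finset.mem_filter] at he
      obtain ⟨heE, hcr⟩ := he
      rw [hE, Finset.mem_filter] at heE
      have helt : e.1 < e.2 := heE.2
      apply sep2_fid
      rcases hcr with ⟨h1, h2⟩ | ⟨h1, h2⟩
      · exact hΛsep e.1 e.2 helt M h1 h2 _ (hstate t)
          (separableAcross_vecProj M (ψ t) hfac (hnorm t))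
      · refine hΛsep e.1 e.2 helt Mᶜ (Finset.mem_compl.mpr h2)
          (fun hc => (Finset.mem_compl.mp hc) h1) _ (hstate t) ?_
        exact separableAcross_vecProj Mᶜ (ψ t) (factorsAcross_compl M (ψ t) hfac) (hnorm t)
    have hnoncross : ∀ e ∈ E, (Matrix.trace (Λ e.1 e.2 (vecProj (ψ t)) * phiPlus 2)).re ≤ 1 := by
      intro e he
      rw [hE, Finset.mem_filter] at he
      exact state_fid _ (hΛstate e.1 e.2 he.2 _ (hstate t))
    -- split the sum
    have hsplit := Finset.sum_filter_add_sum_filter_not E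
      (fun e => (e.1 ∈ M ∧ e.2 ∉ M) ∨ (e.2 ∈ M ∧ e.1 ∉ M))
      (fun e => (Matrix.trace (Λ e.1 e.2 (vecProj (ψ t)) * phiPlus 2)).re)
    have hb1 : ∑ e ∈ X, (Matrix.trace (Λ e.1 e.2 (vecProj (ψ t)) * phiPlus 2)).re
        ≤ (X.card : ℝ) * (1/2) := by
      calc _ ≤ ∑ _e ∈ X, (1/2 : ℝ) := Finset.sum_le_sum hcross
        _ = (X.card : ℝ) * (1/2) := by rw [Finset.sum_const, nsmul_eq_mul]
    set Y := E.filter (fun e => ¬((e.1 ∈ M ∧ e.2 ∉ M) ∨ (e.2 ∈ M ∧ e.1 ∉ M))) with hY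
    have hb2 : ∑ e ∈ Y, (Matrix.trace (Λ e.1 e.2 (vecProj (ψ t)) * phiPlus 2)).re
        ≤ (Y.card : ℝ) := by
      calc _ ≤ ∑ _e ∈ Y, (1 : ℝ) :=
            Finset.sum_le_sum fun e he => hnoncross e (Finset.mem_of_mem_filter e he)
        _ = (Y.card : ℝ) := by rw [Finset.sum_const, nsmul_eq_mul, mul_one]
    have hcards : X.card + Y.card = E.card := by
      rw [hX, hY]
      exact Finset.card_filter_add_card_filter_not _
    have hcardsR : (X.card : ℝ) + (Y.card : ℝ) = (E.card : ℝ) := by exact_mod_cast hcards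
    calc ∑ e ∈ E, (Matrix.trace (Λ e.1 e.2 (vecProj (ψ t)) * phiPlus 2)).re
        = ∑ e ∈ X, (Matrix.trace (Λ e.1 e.2 (vecProj (ψ t)) * phiPlus 2)).re
          + ∑ e ∈ Y, (Matrix.trace (Λ e.1 e.2 (vecProj (ψ t)) * phiPlus 2)).re := hsplit.symm
      _ ≤ (X.card : ℝ) * (1/2) + (Y.card : ℝ) := add_le_add hb1 hb2
      _ = (E.card : ℝ) - (X.card : ℝ) / 2 := by linarith
      _ ≤ (E.card : ℝ) - ((n : ℝ) - 1) / 2 := by linarith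
  -- linearity in χ
  have hlin : ∀ i j : Fin n, (Matrix.trace (Λ i j χ * phiPlus 2)).re
      = ∑ t, w t * (Matrix.trace (Λ i j (vecProj (ψ t)) * phiPlus 2)).re := by
    intro i j
    rw [hχeq, map_sum]
    simp only [map_smul]
    rw [Matrix.sum_mul, Matrix.trace_sum]
    simp only [Matrix.smul_mul, Matrix.trace_smul, smul_eq_mul, Complex.re_sum]
    exact Finset.sum_congr rfl fun t _ => Complex.re_ofReal_mul _ _
  have hsum : ∑ e ∈ E, (Matrix.trace (Λ e.1 e.2 χ * phiPlus 2)).re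
      ≤ (E.card : ℝ) - ((n : ℝ) - 1) / 2 := by
    calc ∑ e ∈ E, (Matrix.trace (Λ e.1 e.2 χ * phiPlus 2)).re
        = ∑ e ∈ E, ∑ t, w t * (Matrix.trace (Λ e.1 e.2 (vecProj (ψ t)) * phiPlus 2)).re :=
          Finset.sum_congr rfl fun e _ => hlin e.1 e.2
      _ = ∑ t, w t * ∑ e ∈ E, (Matrix.trace (Λ e.1 e.2 (vecProj (ψ t)) * phiPlus 2)).re := by
          rw [Finset.sum_comm]
          exact Finset.sum_congr rfl fun t _ => (Finset.mul_sum _ _ _).symm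
      _ ≤ ∑ t, w t * ((E.card : ℝ) - ((n : ℝ) - 1) / 2) :=
          Finset.sum_le_sum fun t _ => mul_le_mul_of_nonneg_left (key t) (hw0 t)
      _ = (E.card : ℝ) - ((n : ℝ) - 1) / 2 := by rw [← Finset.sum_mul, hw1, one_mul]
  -- arithmetic
  have hn3 : (3 : ℝ) ≤ (n : ℝ) := by exact_mod_cast hn
  have hcardE : (E.card : ℝ) = (n : ℝ) * ((n : ℝ) - 1) / 2 := by
    have h := card_lt_pairs n
    have h' : 2 * (E.card : ℝ) + (n : ℝ) = (n : ℝ) * (n : ℝ) := by exact_mod_cast h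
    linarith
  have hpos : (0 : ℝ) < (n : ℝ) * ((n : ℝ) - 1) := by nlinarith
  have hfinal : (2 / ((n : ℝ) * ((n : ℝ) - 1))) *
      ((E.card : ℝ) - ((n : ℝ) - 1) / 2) = 1 - 1 / (n : ℝ) := by
    rw [hcardE]
    field_simp
  calc (2 / ((n : ℝ) * ((n : ℝ) - 1))) *
        ∑ e ∈ E, (Matrix.trace (Λ e.1 e.2 χ * phiPlus 2)).re
      ≤ (2 / ((n : ℝ) * ((n : ℝ) - 1))) * ((E.card : ℝ) - ((n : ℝ) - 1) / 2) :=
        mul_le_mul_of_nonneg_left hsum (by positivity)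
    _ = 1 - 1 / (n : ℝ) := hfinal
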